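/- Under these hypotheses, for every k ≥ 1 the family of indices j ≥ 1 with j ≠ k, j ↦ (x_j − x_k)/(x_j − q·x_k), is multipliable and ∏_{j≥1, j≠k} (x_j − x_k)/(x_j − q·x_k) = (q−1)·x_k. -/

import Mathlib

open Filter Topology Complex Set

/-- The deformed exponential function `f(x;q) = ∑_{n≥0} x^n q^(n(n-1)/2) / n!`. -/
noncomputable def deformedExp (x q : ℂ) : ℂ :=
  ∑' n : ℕ, x ^ n * q ^ (n * (n - 1) / 2) / (n.factorial : ℂ)

lemma tri_succ (m : ℕ) : (m + 1) * ((m + 1) - 1) / 2 = m * (m - 1) / 2 + m := by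
  have h : (m + 1) * ((m + 1) - 1) = m * (m - 1) + 2 * m := by
    cases m with
    | zero => simp
    | succ n => simp [Nat.succ_sub_one]; ring
  rw [h, Nat.add_mul_div_left _ _ (by norm_num : 0 < 2)]

lemma deformedExp_summand_norm_le (x q : ℂ) (hq : ‖q‖ ≤ 1) (n : ℕ) :
    ‖x ^ n * q ^ (n * (n - 1) / 2) / (n.factorial : ℂ)‖ ≤ ‖x‖ ^ n / n.factorial := by
  rw [norm_div, norm_mul, norm_pow, norm_pow]
  have h1 : ‖q‖ ^ (n * (n - 1) / 2) ≤ 1 := pow_le_one₀ (norm_nonneg _) hq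
  have h2 : ‖((n.factorial : ℂ))‖ = (n.factorial : ℝ) := by
    simp [Complex.norm_natCast]
  rw [h2]
  calc ‖x‖ ^ n * ‖q‖ ^ (n * (n - 1) / 2) / (n.factorial : ℝ)
      ≤ ‖x‖ ^ n * 1 / (n.factorial : ℝ) := by
        gcongr
    _ = ‖x‖ ^ n / (n.factorial : ℝ) := by ring

lemma deformedExp_summable (x q : ℂ) (hq : ‖q‖ ≤ 1) :
    Summable (fun n : ℕ => x ^ n * q ^ (n * (n - 1) / 2) / (n.factorial : ℂ)) := by
  apply Summable.of_norm_bounded (Real.summable_pow_div_factorial ‖x‖)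
  exact deformedExp_summand_norm_le x q hq

lemma deformedExp_hasSum (x q : ℂ) (hq : ‖q‖ ≤ 1) :
    HasSum (fun n : ℕ => x ^ n * q ^ (n * (n - 1) / 2) / (n.factorial : ℂ)) (deformedExp x q) :=
  (deformedExp_summable x q hq).hasSum

lemma deformedExp_coeff_succ (q : ℂ) (m : ℕ) :
    ((m + 1 : ℕ) : ℂ) * (q ^ ((m + 1) * ((m + 1) - 1) / 2) / ((m + 1).factorial : ℂ)) =
      q ^ (m * (m - 1) / 2) * q ^ m / (m.factorial : ℂ) := by
  have h1 : ((m + 1 : ℕ) : ℂ) ≠ 0 := Nat.cast_ne_zero.mpr (Nat.succ_ne_zero m)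
  rw [tri_succ, pow_add, Nat.factorial_succ, Nat.cast_mul, ← mul_div_assoc,
    mul_div_mul_left _ _ h1]

lemma deformedExp_hasDerivAt (q : ℂ) (hq : ‖q‖ ≤ 1) (z₀ : ℂ) :
    HasDerivAt (fun z => deformedExp z q) (deformedExp (q * z₀) q) z₀ := by
  set R : ℝ := ‖z₀‖ + 1 with hR
  have hRpos : 0 < R := by positivity
  apply hasDerivAt_of_tendstoLocallyUniformlyOn (s := Metric.ball (0 : ℂ) R)
    Metric.isOpen_ball
    (g := fun z => deformedExp z q) (g' := fun z => deformedExp (q * z) q)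
    (l := atTop) (f := fun (N : ℕ) (z : ℂ) => ∑ n ∈ Finset.range (N + 1), z ^ n * q ^ (n * (n - 1) / 2) / (n.factorial : ℂ))
    (f' := fun (N : ℕ) (z : ℂ) => ∑ n ∈ Finset.range N, (q * z) ^ n * q ^ (n * (n - 1) / 2) / (n.factorial : ℂ))
  · -- TendstoLocallyUniformlyOn of derivatives
    apply TendstoUniformlyOn.tendstoLocallyUniformlyOn
    have hb : ∀ (n : ℕ) (z : ℂ), z ∈ Metric.ball (0 : ℂ) R →
        ‖(q * z) ^ n * q ^ (n * (n - 1) / 2) / (n.factorial : ℂ)‖ ≤ R ^ n / n.factorial := by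
      intro n z hz
      refine (deformedExp_summand_norm_le (q * z) q hq n).trans ?_
      gcongr
      rw [norm_mul]
      have hz' : ‖z‖ < R := by simpa [Metric.mem_ball] using hz
      calc ‖q‖ * ‖z‖ ≤ 1 * R := by
            apply mul_le_mul hq hz'.le (norm_nonneg _) zero_le_one
        _ = R := one_mul R
    have := tendstoUniformlyOn_tsum_nat (f := fun n (z : ℂ) =>
        (q * z) ^ n * q ^ (n * (n - 1) / 2) / (n.factorial : ℂ))
        (Real.summable_pow_div_factorial R) hb
    exact this
  · -- each partial sum has the claimed derivative
    filter_upwards with N z hz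
    have hterm : ∀ n : ℕ, HasDerivAt (fun w : ℂ => w ^ n * q ^ (n * (n - 1) / 2) / (n.factorial : ℂ))
        ((n : ℂ) * z ^ (n - 1) * (q ^ (n * (n - 1) / 2) / (n.factorial : ℂ))) z := by
      intro n
      simpa [mul_div_assoc] using (hasDerivAt_pow n z).mul_const (q ^ (n * (n - 1) / 2) / (n.factorial : ℂ))
    have hsum := HasDerivAt.fun_sum (u := Finset.range (N + 1)) (fun n _ => hterm n)
    convert hsum using 1
    rw [Finset.sum_range_succ']
    simp only [Nat.cast_zero, zero_mul, Nat.zero_sub, pow_zero, add_zero]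
    rw [eq_comm]
    apply Finset.sum_congr rfl
    intro m _
    have := deformedExp_coeff_succ q m
    calc ((m + 1 : ℕ) : ℂ) * z ^ (m + 1 - 1) * (q ^ ((m + 1) * ((m + 1) - 1) / 2) / (((m + 1).factorial : ℕ) : ℂ))
        = z ^ m * (((m + 1 : ℕ) : ℂ) * (q ^ ((m + 1) * ((m + 1) - 1) / 2) / ((m + 1).factorial : ℂ))) := by
          simp only [Nat.add_sub_cancel]; ring
      _ = z ^ m * (q ^ (m * (m - 1) / 2) * q ^ m / (m.factorial : ℂ)) := by rw [this]
      _ = (q * z) ^ m * q ^ (m * (m - 1) / 2) / (m.factorial : ℂ) := by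
          rw [mul_pow]; ring
  · -- pointwise convergence
    intro z hz
    have h := (deformedExp_hasSum z q hq).tendsto_sum_nat
    exact h.comp (tendsto_add_atTop_nat 1)
  · have : dist z₀ 0 < R := by
      rw [dist_zero_right]; simp only [hR]; linarith
    simpa [Metric.mem_ball] using this

lemma hasProd_div_aux {ι : Type*} {f g : ι → ℂ} {a b : ℂ} (hf : HasProd f a) (hg : HasProd g b)
    (hb : b ≠ 0) : HasProd (fun i => f i / g i) (a / b) := by
  have h1 : Tendsto (fun s : Finset ι => ∏ i ∈ s, f i) atTop (𝓝 a) := hf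
  have h2 : Tendsto (fun s : Finset ι => ∏ i ∈ s, g i) atTop (𝓝 b) := hg
  have h3 : Tendsto (fun s : Finset ι => (∏ i ∈ s, f i) / (∏ i ∈ s, g i)) atTop (𝓝 (a / b)) :=
    h1.div h2 hb
  have : (fun s : Finset ι => (∏ i ∈ s, f i) / (∏ i ∈ s, g i)) =
      fun s : Finset ι => ∏ i ∈ s, (f i / g i) := by
    funext s; rw [Finset.prod_div_distrib]
  rwa [this] at h3

lemma hasProd_erase_aux {f : ℕ → ℂ} {a : ℂ} {k : ℕ} (h : HasProd f a) (hk : f k ≠ 0) :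
    HasProd (fun j : {j : ℕ // j ≠ k} => f j) (a / f k) := by
  classical
  have htend : Tendsto (fun s : Finset ℕ => ∏ b ∈ s, f b) atTop (𝓝 a) := h
  set e : {j : ℕ // j ≠ k} ↪ ℕ := ⟨Subtype.val, Subtype.val_injective⟩ with he
  have hmap : Tendsto (fun t : Finset {j : ℕ // j ≠ k} => insert k (t.map e)) atTop atTop := by
    apply tendsto_atTop_finset_of_monotone
    · intro s t hst
      exact Finset.insert_subset_insert _ (Finset.map_subset_map.mpr hst)
    · intro b
      by_cases hb : b = k
      · exact ⟨∅, by simp [hb]⟩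
      · exact ⟨{⟨b, hb⟩}, by simp [he]⟩
  have hcomp : Tendsto (fun t : Finset {j : ℕ // j ≠ k} => ∏ b ∈ insert k (t.map e), f b)
      atTop (𝓝 a) := htend.comp hmap
  have heq : ∀ t : Finset {j : ℕ // j ≠ k},
      ∏ b ∈ insert k (t.map e), f b = f k * ∏ j ∈ t, f j.1 := by
    intro t
    have hknot : k ∉ t.map e := by
      simp only [Finset.mem_map, he]
      rintro ⟨⟨j, hj⟩, _, hjk⟩
      exact hj hjk
    rw [Finset.prod_insert hknot, Finset.prod_map]
    rfl
  simp_rw [heq] at hcomp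
  have := hcomp.const_mul (f k)⁻¹
  have heq2 : (fun t : Finset {j : ℕ // j ≠ k} => (f k)⁻¹ * (f k * ∏ j ∈ t, f j.1)) =
      fun t : Finset {j : ℕ // j ≠ k} => ∏ j ∈ t, f j.1 := by
    funext t; rw [inv_mul_cancel_left₀ hk]
  rw [heq2] at this
  have : Tendsto (fun t : Finset {j : ℕ // j ≠ k} => ∏ j ∈ t, f j.1) atTop (𝓝 (a / f k)) := by
    convert this using 1
    rw [div_eq_inv_mul]
  exact this

lemma sum_le_prod_one_add (s : Finset ℕ) (a : ℕ → ℝ) (ha : ∀ j, 0 ≤ a j) :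
    ∑ j ∈ s, a j ≤ ∏ j ∈ s, (1 + a j) := by
  classical
  induction s using Finset.induction with
  | empty => simp
  | insert i s hx ih =>
    rw [Finset.sum_insert hx, Finset.prod_insert hx]
    have hprod1 : (1 : ℝ) ≤ ∏ j ∈ s, (1 + a j) := by
      have : ∏ j ∈ s, (1:ℝ) ≤ ∏ j ∈ s, (1 + a j) :=
        Finset.prod_le_prod (fun j _ => zero_le_one) (fun j _ => by linarith [ha j])
      simpa using this
    have := ha i
    nlinarith

set_option maxHeartbeats 1000000 in
theorem stmt7 (q : ℝ) (hq : q ∈ Set.Ioo (0 : ℝ) 1) (x : ℕ → ℝ)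
    (hanti : StrictAnti x) (hneg : ∀ j, x j < 0)
    (hzero : ∀ j, deformedExp ((x j : ℂ)) ((q : ℂ)) = 0)
    (hprod : ∀ z : ℂ, HasProd (fun j : ℕ => 1 - z / (x j : ℂ)) (deformedExp z (q : ℂ))) :
    ∀ k : ℕ, HasProd (fun j : {j : ℕ // j ≠ k} => (x j.1 - x k) / (x j.1 - q * x k))
      ((q - 1) * x k) := by
  classical
  obtain ⟨hq0, hq1'⟩ := hq
  have hq0' : q ≠ 0 := ne_of_gt hq0
  have hq1 : ‖(q : ℂ)‖ ≤ 1 := by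
    rw [Complex.norm_real, Real.norm_eq_abs, abs_of_pos hq0]; linarith
  have hX0 : ∀ j, ((x j : ℂ)) ≠ 0 := fun j => by
    simp only [ne_eq, Complex.ofReal_eq_zero]
    exact (hneg j).ne
  set a : ℕ → ℝ := fun j => (-(x j))⁻¹ with ha
  have hapos : ∀ j, 0 < a j := fun j => by
    simp only [ha]
    exact inv_pos.mpr (by linarith [hneg j])
  -- factor identity for z = 1
  have hfac1 : ∀ j, (1 : ℂ) - 1 / (x j : ℂ) = ((1 + a j : ℝ) : ℂ) := by
    intro j
    have : (1 : ℝ) - (x j)⁻¹ = 1 + a j := by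
      simp only [ha]
      rw [inv_neg]
      ring
    push_cast [← this]
    ring
  -- Step A : summability of a
  have hsa : Summable a := by
    have hp := hprod 1
    set c := deformedExp 1 (q : ℂ) with hc
    have htends : Tendsto (fun t : Finset ℕ => ∏ j ∈ t, ((1 : ℂ) - 1 / (x j : ℂ))) atTop
        (𝓝 c) := hp
    have hno : Tendsto (fun t : Finset ℕ => ‖∏ j ∈ t, ((1 : ℂ) - 1 / (x j : ℂ))‖) atTop
        (𝓝 ‖c‖) := htends.norm
    have hev : ∀ᶠ t : Finset ℕ in atTop,
        ‖∏ j ∈ t, ((1 : ℂ) - 1 / (x j : ℂ))‖ < ‖c‖ + 1 :=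
      hno.eventually_lt_const (by linarith [norm_nonneg c])
    have hnorm_eq : ∀ t : Finset ℕ,
        ‖∏ j ∈ t, ((1 : ℂ) - 1 / (x j : ℂ))‖ = ∏ j ∈ t, (1 + a j) := by
      intro t
      have : ∏ j ∈ t, ((1 : ℂ) - 1 / (x j : ℂ)) = ((∏ j ∈ t, (1 + a j) : ℝ) : ℂ) := by
        rw [Complex.ofReal_prod]
        exact Finset.prod_congr rfl fun j _ => hfac1 j
      rw [this, Complex.norm_real, Real.norm_eq_abs, abs_of_pos]
      exact Finset.prod_pos fun j _ => by linarith [hapos j]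
    apply summable_of_sum_le (c := ‖c‖ + 1) (fun j => (hapos j).le)
    intro s
    obtain ⟨t, ht1, ht2⟩ := (hev.and (eventually_ge_atTop s)).exists
    calc ∑ j ∈ s, a j ≤ ∏ j ∈ s, (1 + a j) := sum_le_prod_one_add s a fun j => (hapos j).le
      _ ≤ ∏ j ∈ t, (1 + a j) := by
          rw [← Finset.prod_sdiff ht2]
          have h1 : (1 : ℝ) ≤ ∏ j ∈ t \ s, (1 + a j) := by
            have : ∏ j ∈ t \ s, (1 : ℝ) ≤ ∏ j ∈ t \ s, (1 + a j) :=
              Finset.prod_le_prod (fun j _ => zero_le_one) (fun j _ => by linarith [hapos j])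
            simpa using this
          have h2 : 0 ≤ ∏ j ∈ s, (1 + a j) :=
            Finset.prod_nonneg fun j _ => by linarith [hapos j]
          exact le_mul_of_one_le_left h2 h1
      _ = ‖∏ j ∈ t, ((1 : ℂ) - 1 / (x j : ℂ))‖ := (hnorm_eq t).symm
      _ ≤ ‖c‖ + 1 := ht1.le
  -- |x j| → ∞
  have hbig : ∀ M : ℝ, 0 < M → ∀ᶠ j in atTop, a j ≤ M⁻¹ ∧ M ≤ -(x j) := by
    intro M hM
    have h0 : Tendsto a atTop (𝓝 0) := hsa.tendsto_atTop_zero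
    have := h0.eventually_lt_const (show (0:ℝ) < M⁻¹ by positivity)
    filter_upwards [this] with j hj
    have hxj : 0 < -(x j) := by linarith [hneg j]
    refine ⟨hj.le, ?_⟩
    have hj' : (-(x j))⁻¹ < M⁻¹ := by simpa [ha] using hj
    have := (inv_lt_inv₀ hxj hM).mp hj'
    linarith
  -- real version g of deformedExp
  set g : ℝ → ℝ := fun t => ∑' n : ℕ, t ^ n * q ^ (n * (n - 1) / 2) / (n.factorial : ℝ)
    with hgdef
  have hgsum : ∀ t : ℝ, Summable (fun n : ℕ => t ^ n * q ^ (n * (n - 1) / 2) / (n.factorial : ℝ)) := by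
    intro t
    apply Summable.of_norm_bounded (Real.summable_pow_div_factorial |t|)
    intro n
    have h1 : |q| ^ (n * (n - 1) / 2) ≤ 1 := by
      apply pow_le_one₀ (abs_nonneg q)
      rw [abs_of_pos hq0]; linarith
    rw [Real.norm_eq_abs, abs_div, abs_mul, _root_.abs_pow, _root_.abs_pow, Nat.abs_cast]
    calc |t| ^ n * |q| ^ (n * (n - 1) / 2) / (n.factorial : ℝ)
        ≤ |t| ^ n * 1 / (n.factorial : ℝ) := by
          gcongr
      _ = |t| ^ n / (n.factorial : ℝ) := by ring
  have hgC : ∀ t : ℝ, ((g t : ℝ) : ℂ) = deformedExp (t : ℂ) (q : ℂ) := by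
    intro t
    rw [show ((∑' n : ℕ, t ^ n * q ^ (n * (n - 1) / 2) / (n.factorial : ℝ) : ℝ) : ℂ)
        = ∑' n : ℕ, ((t ^ n * q ^ (n * (n - 1) / 2) / (n.factorial : ℝ) : ℝ) : ℂ) from
      Complex.ofRealCLM.map_tsum (hgsum t)]
    rw [deformedExp]
    congr 1
    funext n
    push_cast
    ring
  -- real derivative
  have hgderiv : ∀ t : ℝ, HasDerivAt g (g (q * t)) t := by
    intro t
    have h := (deformedExp_hasDerivAt (q : ℂ) hq1 (t : ℂ)).real_of_complex
    have h2 : (fun s : ℝ => (deformedExp (s : ℂ) (q : ℂ)).re) = g := by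
      funext s
      rw [← hgC s, Complex.ofReal_re]
    have h3 : (deformedExp ((q : ℂ) * (t : ℂ)) (q : ℂ)).re = g (q * t) := by
      rw [show ((q : ℂ) * (t : ℂ)) = ((q * t : ℝ) : ℂ) by push_cast; ring, ← hgC, Complex.ofReal_re]
    rw [h2, h3] at h
    exact h
  have hzeroR : ∀ j, g (x j) = 0 := by
    intro j
    have := hzero j
    rw [← hgC] at this
    exact_mod_cast this
  -- zeros are exactly the x j
  have hzeros : ∀ t : ℝ, deformedExp (t : ℂ) (q : ℂ) = 0 → ∃ j, t = x j := by
    intro t h0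
    by_contra hcon
    push_neg at hcon
    set v : ℕ → ℂ := fun j => 1 - (t : ℂ) / (x j : ℂ) with hv
    have hvne : ∀ j, v j ≠ 0 := by
      intro j hj
      rw [hv] at hj
      rw [sub_eq_zero] at hj
      have : (t : ℂ) = (x j : ℂ) := (div_eq_one_iff_eq (hX0 j)).mp hj.symm
      exact hcon j (by exact_mod_cast this)
    have hvnorm : ∀ j, ‖(t : ℂ) / (x j : ℂ)‖ = |t| * a j := by
      intro j
      simp only [norm_div, Complex.norm_real, Real.norm_eq_abs, ha]
      rw [abs_of_neg (hneg j), div_eq_mul_inv]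
    have hsl : Summable (fun j => Complex.log (v j)) := by
      apply Summable.of_norm_bounded_eventually (g := fun j => 2 * (|t| + 1) * a j)
        (hsa.mul_left _)
      rw [Nat.cofinite_eq_atTop]
      filter_upwards [hbig (2 * (|t| + 1)) (by positivity)] with j hj
      have haj : a j ≤ (2 * (|t| + 1))⁻¹ := hj.1
      have hsm : ‖-((t : ℂ) / (x j : ℂ))‖ ≤ 1 / 2 := by
        rw [norm_neg, hvnorm]
        calc |t| * a j ≤ (|t| + 1) * (2 * (|t| + 1))⁻¹ := by
              apply mul_le_mul (by linarith [abs_nonneg t]) haj (hapos j).le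
                (by linarith [abs_nonneg t])
          _ = 1 / 2 := by
              field_simp
      have := Complex.norm_log_one_add_half_le_self hsm
      rw [show (1 : ℂ) + -((t : ℂ) / (x j : ℂ)) = v j by rw [hv]; ring] at this
      refine this.trans ?_
      rw [norm_neg, hvnorm]
      calc 3 / 2 * (|t| * a j) ≤ 2 * ((|t| + 1) * a j) := by
            nlinarith [abs_nonneg t, (hapos j).le]
        _ = 2 * (|t| + 1) * a j := by ring
    have hcexp := hsl.hasSum.cexp
    have hfun : (Complex.exp ∘ fun j => Complex.log (v j)) = v := by
      funext j
      exact Complex.exp_log (hvne j)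
    rw [hfun] at hcexp
    have huniq : deformedExp (t : ℂ) (q : ℂ) = Complex.exp (∑' j, Complex.log (v j)) :=
      HasProd.unique (hprod t) hcexp
    rw [h0] at huniq
    exact Complex.exp_ne_zero _ huniq.symm
  -- q * x k is never a zero
  have hne : ∀ k m : ℕ, q * x k ≠ x m := by
    intro k m hqx
    have hxkm : x k < x m := by
      rw [← hqx]
      nlinarith [hneg k]
    have hmk : m < k := (hanti.lt_iff_gt).mp hxkm
    have hgap : ∀ j : ℕ, ∃ i, x i / q ∈ Set.Ioo (x (j + 1)) (x j) := by
      intro j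
      obtain ⟨c, hc, hc0⟩ := exists_hasDerivAt_eq_zero (f := g) (f' := fun y => g (q * y))
        (hanti (lt_add_one j)) (fun y _ => (hgderiv y).continuousAt.continuousWithinAt)
        ((hzeroR (j + 1)).trans (hzeroR j).symm) (fun y _ => hgderiv y)
      have hz : deformedExp ((q * c : ℝ) : ℂ) (q : ℂ) = 0 := by
        rw [← hgC]
        exact_mod_cast hc0
      obtain ⟨i, hi⟩ := hzeros (q * c) hz
      refine ⟨i, ?_⟩
      have : x i / q = c := by
        rw [← hi]
        field_simp
      rw [this]
      exact hc
    choose σ hσ using hgap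
    have hσlt : ∀ j, σ j ≤ j := by
      intro j
      have h2 : x (j + 1) * q < x (σ j) := (lt_div_iff₀ hq0).mp (hσ j).1
      have h3 : x (j + 1) < x (σ j) := by nlinarith [hneg (j + 1), hq1']
      have := (hanti.lt_iff_gt).mp h3
      omega
    have hσnm : ∀ j, σ j ≠ m := by
      intro j hjm
      have h1 : x m / q = x k := by
        rw [hqx.symm]
        field_simp
      have h2 := hσ j
      rw [hjm, h1] at h2
      have h3 : j < k := (hanti.lt_iff_gt).mp h2.2
      have h4 : k < j + 1 := (hanti.lt_iff_gt).mp h2.1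
      omega
    have hinj : ∀ j j', j < j' → σ j ≠ σ j' := by
      intro j j' hjj' heq
      have h1 : x (j + 1) < x (σ j) / q := (hσ j).1
      have h2 : x (σ j') / q < x j' := (hσ j').2
      rw [← heq] at h2
      have h3 : x j' ≤ x (j + 1) := hanti.antitone (by omega)
      linarith
    have hmaps : ∀ j ∈ Finset.range k, σ j ∈ (Finset.range k).erase m := by
      intro j hj
      rw [Finset.mem_range] at hj
      rw [Finset.mem_erase, Finset.mem_range]
      exact ⟨hσnm j, lt_of_le_of_lt (hσlt j) hj⟩
    have hinj' : Set.InjOn σ (Finset.range k) := by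
      intro j hj j' hj' heq
      rcases lt_trichotomy j j' with h | h | h
      · exact absurd heq (hinj j j' h)
      · exact h
      · exact absurd heq.symm (hinj j' j h)
    have hcard := Finset.card_le_card_of_injOn σ hmaps hinj'
    rw [Finset.card_erase_of_mem (Finset.mem_range.mpr hmk), Finset.card_range] at hcard
    omega
  -- main part
  intro k
  set A : ℂ := (x k : ℂ) with hA
  have hA0 : A ≠ 0 := hX0 k
  set qA : ℂ := (q : ℂ) * A with hqA
  have hqA_real : qA = ((q * x k : ℝ) : ℂ) := by rw [hqA, hA]; push_cast; ring
  have hfqA : deformedExp qA (q : ℂ) ≠ 0 := by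
    intro h
    rw [hqA_real] at h
    obtain ⟨m, hm⟩ := hzeros (q * x k) h
    exact hne k m hm
  have hden_ne : ∀ j, (1 : ℂ) - qA / (x j : ℂ) ≠ 0 := by
    intro j hj
    rw [sub_eq_zero] at hj
    have : qA = (x j : ℂ) := (div_eq_one_iff_eq (hX0 j)).mp hj.symm
    rw [hqA_real] at this
    exact hne k j (by exact_mod_cast this)
  have hqC1 : (1 : ℂ) - (q : ℂ) ≠ 0 := by
    rw [sub_ne_zero]
    intro h
    have : (1 : ℝ) = q := by exact_mod_cast h
    linarith
  -- denominator
  have hD : HasProd (fun j : {j : ℕ // j ≠ k} => (1 : ℂ) - qA / (x j.1 : ℂ))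
      (deformedExp qA (q : ℂ) / (1 - (q : ℂ))) := by
    have h := hasProd_erase_aux (hprod qA) (hden_ne k)
    have : (1 : ℂ) - qA / (x k : ℂ) = 1 - (q : ℂ) := by
      rw [hqA, ← hA, mul_div_assoc, div_self hA0, mul_one]
    rwa [this] at h
  have hDne : deformedExp qA (q : ℂ) / (1 - (q : ℂ)) ≠ 0 := div_ne_zero hfqA hqC1
  -- choose N beyond k with large |x j|
  obtain ⟨N, hN⟩ := Filter.eventually_atTop.mp
    ((hbig (4 * (‖A‖ + 2)) (by positivity)).and (eventually_ge_atTop (k + 1)))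
  have hkN : k < N := by
    have := (hN N le_rfl).2
    omega
  have hzb : ∀ z ∈ Metric.ball A 1, ‖z‖ ≤ ‖A‖ + 1 := by
    intro z hz
    have hd : dist z A < 1 := Metric.mem_ball.mp hz
    rw [dist_eq_norm] at hd
    calc ‖z‖ = ‖A + (z - A)‖ := by congr 1; ring
      _ ≤ ‖A‖ + ‖z - A‖ := norm_add_le _ _
      _ ≤ ‖A‖ + 1 := by linarith
  have hnormz : ∀ (z : ℂ) (j : ℕ), ‖z / ((x j : ℝ) : ℂ)‖ = ‖z‖ * a j := by
    intro z j
    rw [norm_div, Complex.norm_real, Real.norm_eq_abs, abs_of_neg (hneg j), div_eq_mul_inv]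
  have hsmall : ∀ j, N ≤ j → ∀ z ∈ Metric.ball A 1, ‖z / ((x j : ℝ) : ℂ)‖ ≤ 1 / 2 := by
    intro j hj z hz
    rw [hnormz]
    have haj : a j ≤ (4 * (‖A‖ + 2))⁻¹ := (hN j hj).1.1
    have h1 : ‖z‖ * a j ≤ (‖A‖ + 1) * (4 * (‖A‖ + 2))⁻¹ :=
      mul_le_mul (hzb z hz) haj (hapos j).le (by positivity)
    refine h1.trans ?_
    rw [inv_eq_one_div, mul_one_div, div_le_div_iff₀ (by positivity) (by norm_num)]
    nlinarith [norm_nonneg A]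
  have hfacne : ∀ j, N ≤ j → ∀ z ∈ Metric.ball A 1, (1 : ℂ) - z / ((x j : ℝ) : ℂ) ≠ 0 := by
    intro j hj z hz h
    rw [sub_eq_zero] at h
    have h1 : ‖z / ((x j : ℝ) : ℂ)‖ = 1 := by rw [← h]; simp
    have h2 := hsmall j hj z hz
    rw [h1] at h2
    linarith
  set Lg : ℕ → ℂ → ℂ := fun j z => if N ≤ j then Complex.log (1 - z / ((x j : ℝ) : ℂ)) else 0
    with hLgdef
  set u : ℕ → ℝ := fun j => if N ≤ j then 2 * (‖A‖ + 1) * a j else 0 with hu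
  have husum : Summable u := by
    apply Summable.of_nonneg_of_le _ _ (hsa.mul_left (2 * (‖A‖ + 1)))
    · intro j
      simp only [hu]
      split
      · exact mul_nonneg (by positivity) (hapos j).le
      · exact le_refl 0
    · intro j
      simp only [hu]
      split
      · exact le_refl _
      · exact mul_nonneg (by positivity) (hapos j).le
  have hLgb : ∀ j (z : ℂ), z ∈ Metric.ball A 1 → ‖Lg j z‖ ≤ u j := by
    intro j z hz
    simp only [hLgdef, hu]
    split
    · rename_i hj
      have hsm : ‖-(z / ((x j : ℝ) : ℂ))‖ ≤ 1 / 2 := by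
        rw [norm_neg]; exact hsmall j hj z hz
      have hb := Complex.norm_log_one_add_half_le_self hsm
      rw [show (1 : ℂ) + -(z / ((x j : ℝ) : ℂ)) = 1 - z / ((x j : ℝ) : ℂ) by ring] at hb
      refine hb.trans ?_
      rw [norm_neg, hnormz]
      have := hzb z hz
      nlinarith [(hapos j).le, hzb z hz, norm_nonneg z]
    · simp
  have hLsum : ∀ z ∈ Metric.ball A 1, Summable (fun j => Lg j z) := by
    intro z hz
    exact Summable.of_norm_bounded husum (fun j => hLgb j z hz)
  have hTprod : ∀ z ∈ Metric.ball A 1,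
      HasProd (fun j : ℕ => if N ≤ j then (1 : ℂ) - z / ((x j : ℝ) : ℂ) else 1)
        (Complex.exp (∑' j, Lg j z)) := by
    intro z hz
    have hc := (hLsum z hz).hasSum.cexp
    have hfun : (Complex.exp ∘ fun j => Lg j z) =
        fun j : ℕ => if N ≤ j then (1 : ℂ) - z / ((x j : ℝ) : ℂ) else 1 := by
      funext j
      simp only [Function.comp_apply, hLgdef]
      split
      · rename_i hj
        exact Complex.exp_log (hfacne j hj z hz)
      · exact Complex.exp_zero
    rwa [hfun] at hc
  set S1 : Finset ℕ := (Finset.range N).erase k with hS1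
  set F : ℂ → ℂ := fun z => (∏ j ∈ S1, ((1 : ℂ) - z / ((x j : ℝ) : ℂ))) *
    Complex.exp (∑' j, Lg j z) with hFdef
  have hW : ∀ z ∈ Metric.ball A 1,
      HasProd (fun j : {j : ℕ // j ≠ k} => (1 : ℂ) - z / ((x j.1 : ℝ) : ℂ)) (F z) := by
    intro z hz
    set w1 : ℕ → ℂ := fun j => if j ∈ S1 then (1 : ℂ) - z / ((x j : ℝ) : ℂ) else 1 with hw1
    have h1 : HasProd w1 (∏ j ∈ S1, ((1 : ℂ) - z / ((x j : ℝ) : ℂ))) := by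
      have h := hasProd_prod_of_ne_finset_one (s := S1) (f := w1) (L := SummationFilter.unconditional ℕ)
        (fun b hb => by simp only [hw1]; exact if_neg hb)
      have heq : ∏ b ∈ S1, w1 b = ∏ j ∈ S1, ((1 : ℂ) - z / ((x j : ℝ) : ℂ)) :=
        Finset.prod_congr rfl fun b hb => by simp only [hw1]; exact if_pos hb
      rwa [heq] at h
    have h3 := h1.mul (hTprod z hz)
    have heq2 : (fun j : ℕ => w1 j * (if N ≤ j then (1 : ℂ) - z / ((x j : ℝ) : ℂ) else 1)) =
        Set.mulIndicator {i : ℕ | i ≠ k} (fun j : ℕ => (1 : ℂ) - z / ((x j : ℝ) : ℂ)) := by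
      funext j
      rw [Set.mulIndicator_apply]
      by_cases hjk : j = k
      · have h4 : j ∉ S1 := by simp [hS1, hjk]
        have h5 : ¬ N ≤ j := by rw [hjk]; omega
        have h6 : j ∉ {i : ℕ | i ≠ k} := by simp [hjk]
        rw [if_neg h6]
        simp only [hw1]
        rw [if_neg h4, if_neg h5, one_mul]
      · have h6 : j ∈ {i : ℕ | i ≠ k} := hjk
        rw [if_pos h6]
        by_cases hjN : N ≤ j
        · have h4 : j ∉ S1 := by
            simp only [hS1, Finset.mem_erase, Finset.mem_range]
            intro hcon
            omega
          simp only [hw1]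
          rw [if_neg h4, if_pos hjN, one_mul]
        · have h4 : j ∈ S1 := by
            simp only [hS1, Finset.mem_erase, Finset.mem_range]
            exact ⟨hjk, by omega⟩
          simp only [hw1]
          rw [if_pos h4, if_neg hjN, mul_one]
    rw [heq2] at h3
    have h5 : HasProd ((fun j : ℕ => (1 : ℂ) - z / ((x j : ℝ) : ℂ)) ∘
        ((↑) : {i : ℕ | i ≠ k} → ℕ)) (F z) :=
      (hasProd_subtype_iff_mulIndicator (s := {i : ℕ | i ≠ k})
        (f := fun j : ℕ => (1 : ℂ) - z / ((x j : ℝ) : ℂ)) (a := F z)).mpr h3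
    exact h5
  have hFcont : ContinuousOn F (Metric.ball A 1) := by
    rw [hFdef]
    apply ContinuousOn.mul
    · apply Continuous.continuousOn
      apply continuous_finset_prod
      intro i _
      exact continuous_const.sub (continuous_id.div_const _)
    · apply Complex.continuous_exp.comp_continuousOn
      apply continuousOn_tsum (u := u) _ husum (fun j z hz => hLgb j z hz)
      intro j
      simp only [hLgdef]
      split
      · rename_i hj
        apply ContinuousOn.clog
        · exact (continuous_const.sub (continuous_id.div_const _)).continuousOn
        · intro z hz
          rw [Complex.mem_slitPlane_iff]
          left
          have h1 : ((1 : ℂ) - z / ((x j : ℝ) : ℂ)).re = 1 - (z / ((x j : ℝ) : ℂ)).re := by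
            simp [Complex.sub_re]
          rw [h1]
          have h2 : (z / ((x j : ℝ) : ℂ)).re ≤ ‖z / ((x j : ℝ) : ℂ)‖ := by
            exact Complex.re_le_norm _
          have h3 := hsmall j hj z hz
          linarith
      · exact continuousOn_const
  have hkey : ∀ z ∈ Metric.ball A 1, z ≠ A →
      F z = deformedExp z (q : ℂ) / (1 - z / A) := by
    intro z hz hzA
    have hfzk : (1 : ℂ) - z / ((x k : ℝ) : ℂ) ≠ 0 := by
      intro h
      rw [sub_eq_zero] at h
      exact hzA ((div_eq_one_iff_eq hA0).mp h.symm)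
    exact (hW z hz).unique (hasProd_erase_aux (hprod z) hfzk)
  have hfA' : deformedExp A (q : ℂ) = 0 := hzero k
  have hratio : Tendsto (fun z => deformedExp z (q : ℂ) / (1 - z / A)) (𝓝[≠] A)
      (𝓝 (-A * deformedExp qA (q : ℂ))) := by
    have h1 := hasDerivAt_iff_tendsto_slope.mp (deformedExp_hasDerivAt (q : ℂ) hq1 A)
    have h2 := h1.const_mul (-A)
    apply Filter.Tendsto.congr' _ h2
    filter_upwards [self_mem_nhdsWithin] with z hz
    have hzA : z ≠ A := hz
    rw [slope_def_field, hfA']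
    have hzA' : z - A ≠ 0 := sub_ne_zero.mpr hzA
    have hAz : A - z ≠ 0 := sub_ne_zero.mpr (Ne.symm hzA)
    field_simp
    try ring
  have hFA : F A = -A * deformedExp qA (q : ℂ) := by
    have hball : Metric.ball A 1 ∈ 𝓝 A := Metric.ball_mem_nhds A one_pos
    have hTF : Tendsto F (𝓝[≠] A) (𝓝 (F A)) :=
      (hFcont.continuousAt hball).continuousWithinAt
    have hev : (fun z => deformedExp z (q : ℂ) / (1 - z / A)) =ᶠ[𝓝[≠] A] F := by
      filter_upwards [mem_nhdsWithin_of_mem_nhds hball, self_mem_nhdsWithin] with z hz1 hz2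
      exact (hkey z hz1 hz2).symm
    have hT2 : Tendsto F (𝓝[≠] A) (𝓝 (-A * deformedExp qA (q : ℂ))) :=
      hratio.congr' hev
    exact tendsto_nhds_unique hTF hT2
  have hNum : HasProd (fun j : {j : ℕ // j ≠ k} => (1 : ℂ) - A / ((x j.1 : ℝ) : ℂ))
      (-A * deformedExp qA (q : ℂ)) := by
    have := hW A (Metric.mem_ball_self one_pos)
    rwa [hFA] at this
  have hdiv := hasProd_div_aux hNum hD hDne
  have hval : (-A * deformedExp qA (q : ℂ)) / (deformedExp qA (q : ℂ) / (1 - (q : ℂ))) =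
      (((q - 1) * x k : ℝ) : ℂ) := by
    push_cast
    rw [hA]
    field_simp
    try ring
  have hfuneq : (fun j : {j : ℕ // j ≠ k} =>
        ((1 : ℂ) - A / ((x j.1 : ℝ) : ℂ)) / ((1 : ℂ) - qA / ((x j.1 : ℝ) : ℂ))) =
      fun j : {j : ℕ // j ≠ k} => (((x j.1 - x k) / (x j.1 - q * x k) : ℝ) : ℂ) := by
    funext j
    have hXj := hX0 j.1
    have hd2 : ((x j.1 : ℝ) : ℂ) - (q : ℂ) * ((x k : ℝ) : ℂ) ≠ 0 := by
      have : x j.1 - q * x k ≠ 0 := sub_ne_zero.mpr (Ne.symm (hne k j.1))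
      intro h
      apply this
      have h9 : ((x j.1 - q * x k : ℝ) : ℂ) = 0 := by push_cast; exact h
      exact_mod_cast h9
    have hd3 : (1 : ℂ) - qA / ((x j.1 : ℝ) : ℂ) ≠ 0 := hden_ne j.1
    push_cast
    rw [hqA, hA]
    rw [div_eq_div_iff hd3 hd2]
    field_simp
    try ring
  rw [hfuneq, hval] at hdiv
  -- transfer to ℝ
  have htendC : Tendsto (fun s : Finset {j : ℕ // j ≠ k} =>
      ∏ j ∈ s, (((x j.1 - x k) / (x j.1 - q * x k) : ℝ) : ℂ)) atTop
      (𝓝 (((q - 1) * x k : ℝ) : ℂ)) := hdiv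
  show Tendsto (fun s : Finset {j : ℕ // j ≠ k} =>
      ∏ j ∈ s, ((x j.1 - x k) / (x j.1 - q * x k))) atTop (𝓝 ((q - 1) * x k))
  apply (Complex.isometry_ofReal.isEmbedding.tendsto_nhds_iff).mpr
  have hcomp : ((↑) ∘ fun s : Finset {j : ℕ // j ≠ k} =>
      ∏ j ∈ s, ((x j.1 - x k) / (x j.1 - q * x k)) : Finset {j : ℕ // j ≠ k} → ℂ) =
      fun s : Finset {j : ℕ // j ≠ k} =>
        ∏ j ∈ s, (((x j.1 - x k) / (x j.1 - q * x k) : ℝ) : ℂ) := by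
    funext s
    simp only [Function.comp_apply]
    rw [Complex.ofReal_prod]
  rw [hcomp]
  exact htendC
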